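/- Let H be an inner product space over 𝕂 (𝕂 = ℝ or ℂ), (e_i)_{i∈I} an orthonormal family in H, F a finite subset of I, φ_i, Φ_i ∈ 𝕂 for i ∈ F, and x ∈ H. Then the condition Re⟨Σ_{i∈F} Φ_i e_i − x, x − Σ_{i∈F} φ_i e_i⟩ ≥ 0 holds if and only if ‖x − Σ_{i∈F} ((φ_i + Φ_i)/2) e_i‖ ≤ (1/2)(Σ_{i∈F} |Φ_i − φ_i|²)^{1/2}. -/

import Mathlib

open RCLike Finset

variable {𝕂 H I : Type*} [RCLike 𝕂] [NormedAddCommGroup H] [InnerProductSpace 𝕂 H]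

local notation "⟪" x ", " y "⟫" => @inner 𝕂 _ _ x y

theorem stmt7 (e : I → H) (he : Orthonormal 𝕂 e) (F : Finset I)
    (φ Φ : I → 𝕂) (x : H) :
    0 ≤ re ⟪∑ i ∈ F, Φ i • e i - x, x - ∑ i ∈ F, φ i • e i⟫ ↔
      ‖x - ∑ i ∈ F, ((φ i + Φ i) / 2) • e i‖ ≤
        (1 / 2) * Real.sqrt (∑ i ∈ F, ‖Φ i - φ i‖ ^ 2) := by
  set a := ∑ i ∈ F, Φ i • e i with ha
  set b := ∑ i ∈ F, φ i • e i with hb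
  set m := ∑ i ∈ F, ((φ i + Φ i) / 2) • e i with hm
  set d := ∑ i ∈ F, ((Φ i - φ i) / 2) • e i with hd
  have h1 : a - m = d := by
    rw [ha, hm, hd, ← Finset.sum_sub_distrib]
    refine Finset.sum_congr rfl fun i _ => ?_
    rw [← sub_smul]; ring_nf
  have h2 : m - b = d := by
    rw [hb, hm, hd, ← Finset.sum_sub_distrib]
    refine Finset.sum_congr rfl fun i _ => ?_
    rw [← sub_smul]; ring_nf
  have key : re ⟪a - x, x - b⟫ = ‖d‖ ^ 2 - ‖x - m‖ ^ 2 := by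
    have e1 : a - x = d - (x - m) := by rw [← h1]; abel
    have e2 : x - b = (x - m) + d := by rw [← h2]; abel
    rw [e1, e2]
    have expand : ⟪d - (x - m), (x - m) + d⟫
        = ⟪d, x - m⟫ + ⟪d, d⟫ - ⟪x - m, x - m⟫ - ⟪x - m, d⟫ := by
      simp only [inner_sub_left, inner_add_right]; ring
    rw [expand, map_sub, map_sub, map_add, inner_re_symm (x - m) d,
      ← inner_self_eq_norm_sq (𝕜 := 𝕂), ← inner_self_eq_norm_sq (𝕜 := 𝕂)]
    ring
  have hnd : ‖d‖ = (1 / 2) * Real.sqrt (∑ i ∈ F, ‖Φ i - φ i‖ ^ 2) := by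
    have : (‖d‖ : ℝ) ^ 2 = ∑ i ∈ F, ‖(Φ i - φ i) / 2‖ ^ 2 := by
      rw [← inner_self_eq_norm_sq (𝕜 := 𝕂), hd, he.inner_sum]
      rw [map_sum]
      refine Finset.sum_congr rfl fun i _ => ?_
      rw [← RCLike.inner_apply', inner_self_eq_norm_sq]
    have hrw : ∑ i ∈ F, ‖(Φ i - φ i) / 2‖ ^ 2
        = (1 / 4) * ∑ i ∈ F, ‖Φ i - φ i‖ ^ 2 := by
      rw [Finset.mul_sum]
      refine Finset.sum_congr rfl fun i _ => ?_
      rw [norm_div]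
      simp
      ring
    have hnn : (0 : ℝ) ≤ ∑ i ∈ F, ‖Φ i - φ i‖ ^ 2 :=
      Finset.sum_nonneg fun i _ => sq_nonneg _
    rw [hrw] at this
    have : ‖d‖ = Real.sqrt ((1 / 4) * ∑ i ∈ F, ‖Φ i - φ i‖ ^ 2) := by
      rw [← this, Real.sqrt_sq (norm_nonneg _)]
    rw [this, Real.sqrt_mul (by norm_num),
      show (1/4 : ℝ) = (1/2)^2 by norm_num, Real.sqrt_sq (by norm_num)]
  rw [key, hnd.symm, sub_nonneg]
  exact pow_le_pow_iff_left₀ (norm_nonneg _) (norm_nonneg _) (by norm_num)
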